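/- Let k ≥ 1 be an integer, p, a, b ∈ ℝ, and let h, φ : ℝ → ℝ be such that, on some open neighborhood of 0: h is twice differentiable with h''(θ) + h(θ) = 0, h > 0, h'(0) = 0; and φ is twice differentiable at 0 with φ > 0 and φ'(0) = 0. Define, on a neighborhood of 0, G(θ) := φ(θ) h(θ)^{2−p} [ a (h''(θ) + h(θ)) (h(θ) − h'(θ) tan θ)^{k−1} + b (h(θ) − h'(θ) tan θ)^{k} ]. Then G is twice differentiable at 0 and G''(0) + G(0) = b · h(0)^{2+k−p} · ( φ''(0) + (p + k − 1) φ(0) ). -/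

import Mathlib

/-- **The key computation in the loss-of-smoothness example (Section 4).** If near `0` we have
`h'' + h = 0`, `h > 0`, `h'(0) = 0`, `φ > 0`, `φ'(0) = 0`, then
`G = φ h^{2−p} (a (h''+h)(h − h' tan θ)^{k−1} + b (h − h' tan θ)^k)` is twice differentiable
at `0` and `G''(0) + G(0) = b h(0)^{2+k−p} (φ''(0) + (p+k−1) φ(0))`. -/
theorem stmt_15 (k : ℕ) (hk : 1 ≤ k) (p a b : ℝ)
    (h φ : ℝ → ℝ) (U : Set ℝ) (hU : IsOpen U) (hU0 : (0 : ℝ) ∈ U)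
    (hhpos : ∀ θ ∈ U, 0 < h θ)
    (hh1 : ∀ θ ∈ U, DifferentiableAt ℝ h θ)
    (hh2 : ∀ θ ∈ U, DifferentiableAt ℝ (deriv h) θ)
    (hode : ∀ θ ∈ U, deriv (deriv h) θ + h θ = 0)
    (hh'0 : deriv h 0 = 0)
    (hφpos : ∀ θ ∈ U, 0 < φ θ)
    (hφ1 : ∀ θ ∈ U, DifferentiableAt ℝ φ θ)
    (hφ2 : DifferentiableAt ℝ (deriv φ) 0)
    (hφ'0 : deriv φ 0 = 0) :
    let G : ℝ → ℝ := fun θ =>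
      φ θ * h θ ^ (2 - p) *
        (a * (deriv (deriv h) θ + h θ) * (h θ - deriv h θ * Real.tan θ) ^ (k - 1)
          + b * (h θ - deriv h θ * Real.tan θ) ^ k)
    DifferentiableAt ℝ G 0 ∧ DifferentiableAt ℝ (deriv G) 0 ∧
      deriv (deriv G) 0 + G 0 =
        b * h 0 ^ (2 + (k : ℝ) - p) * (deriv (deriv φ) 0 + (p + k - 1) * φ 0) := by
  intro G
  have hGdef : ∀ θ, G θ =
      φ θ * h θ ^ (2 - p) *
        (a * (deriv (deriv h) θ + h θ) * (h θ - deriv h θ * Real.tan θ) ^ (k - 1)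
          + b * (h θ - deriv h θ * Real.tan θ) ^ k) := fun _ => rfl
  set c := h 0 with hcdef
  have hc0 : 0 < c := hhpos 0 hU0
  obtain ⟨ε, hε, hball⟩ := Metric.isOpen_iff.1 hU 0 hU0
  set δ := min ε 1 with hδdef
  have hδ : 0 < δ := lt_min hε one_pos
  set I : Set ℝ := Set.Ioo (-δ) δ with hIdef
  have hIU : I ⊆ U := by
    intro x hx
    apply hball
    rw [Real.ball_eq_Ioo]
    constructor
    · have : -ε ≤ -δ := by simp [hδdef]
      simpa using lt_of_le_of_lt this hx.1
    · exact lt_of_lt_of_le hx.2 (by simp [hδdef])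
  have hI0 : (0:ℝ) ∈ I := by constructor <;> simp [hδ]
  have hInhds : I ∈ nhds (0:ℝ) := isOpen_Ioo.mem_nhds hI0
  have hpi : (1:ℝ) < Real.pi / 2 := by linarith [Real.pi_gt_three]
  have hcos : ∀ θ ∈ I, 0 < Real.cos θ := by
    intro θ hθ
    apply Real.cos_pos_of_mem_Ioo
    have h1 : δ ≤ 1 := min_le_right _ _
    exact ⟨by linarith [hθ.1], by linarith [hθ.2]⟩
  -- Step B : h = c cos on I
  have hd1 : ∀ θ ∈ I, HasDerivAt h (deriv h θ) θ := fun θ hθ => (hh1 θ (hIU hθ)).hasDerivAt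
  have hd2 : ∀ θ ∈ I, HasDerivAt (deriv h) (-h θ) θ := by
    intro θ hθ
    have h1 := (hh2 θ (hIU hθ)).hasDerivAt
    have e : deriv (deriv h) θ = -h θ := by linarith [hode θ (hIU hθ)]
    rwa [e] at h1
  set E : ℝ → ℝ := fun θ => (h θ - c * Real.cos θ)^2 + (deriv h θ + c * Real.sin θ)^2 with hEdef
  have hEderiv : ∀ θ ∈ I, HasDerivAt E 0 θ := by
    intro θ hθ
    have h1 : HasDerivAt (fun θ => h θ - c * Real.cos θ) (deriv h θ + c * Real.sin θ) θ := by
      have := (hd1 θ hθ).sub ((Real.hasDerivAt_cos θ).const_mul c)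
      exact this.congr_deriv (by ring)
    have h2 : HasDerivAt (fun θ => deriv h θ + c * Real.sin θ) (-(h θ - c * Real.cos θ)) θ := by
      have := (hd2 θ hθ).add ((Real.hasDerivAt_sin θ).const_mul c)
      exact this.congr_deriv (by ring)
    have h3 := (h1.pow 2).add (h2.pow 2)
    exact h3.congr_deriv (by push_cast; ring)
  have hEconst : ∀ x ∈ I, E x = 0 := by
    intro x hx
    have h4 := Convex.norm_image_sub_le_of_norm_hasDerivWithin_le
      (f' := fun _ => (0:ℝ)) (C := 0)
      (fun y hy => (hEderiv y hy).hasDerivWithinAt)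
      (fun y _ => by simp) (convex_Ioo _ _) hI0 hx
    have hE0 : E 0 = 0 := by simp [hEdef, hh'0, ← hcdef]
    rw [hE0] at h4
    simp only [zero_mul, sub_zero] at h4
    have := norm_nonneg (E x)
    have h5 : ‖E x‖ = 0 := le_antisymm h4 this
    simpa using h5
  have hEzero : ∀ θ ∈ I, h θ = c * Real.cos θ ∧ deriv h θ = -(c * Real.sin θ) := by
    intro θ hθ
    have hEθ := hEconst θ hθ
    simp only [hEdef] at hEθ
    have h1 : (h θ - c * Real.cos θ)^2 = 0 := by
      nlinarith [sq_nonneg (deriv h θ + c * Real.sin θ)]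
    have h2 : (deriv h θ + c * Real.sin θ)^2 = 0 := by
      nlinarith [sq_nonneg (h θ - c * Real.cos θ)]
    have h1' : h θ - c * Real.cos θ = 0 := by
      have := pow_eq_zero_iff (two_ne_zero).symm.symm |>.1 h1
      exact this
    have h2' : deriv h θ + c * Real.sin θ = 0 := pow_eq_zero_iff two_ne_zero |>.1 h2
    constructor <;> linarith
  have hhcos : ∀ θ ∈ I, h θ = c * Real.cos θ := fun θ hθ => (hEzero θ hθ).1
  have hhsin : ∀ θ ∈ I, deriv h θ = -(c * Real.sin θ) := fun θ hθ => (hEzero θ hθ).2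
  -- Step C : G = F on I
  set q : ℝ := 2 - p - k with hqdef
  set F : ℝ → ℝ := fun θ => b * c ^ (2 + (k:ℝ) - p) * (φ θ * Real.cos θ ^ q) with hFdef
  have hGF : ∀ θ ∈ I, G θ = F θ := by
    intro θ hθ
    have hcosθ := hcos θ hθ
    have hsum := hode θ (hIU hθ)
    have htan : h θ - deriv h θ * Real.tan θ = c / Real.cos θ := by
      rw [hhcos θ hθ, hhsin θ hθ, Real.tan_eq_sin_div_cos]
      field_simp
      nlinarith [Real.sin_sq_add_cos_sq θ]
    have hpow : h θ ^ (2 - p) = c ^ (2 - p) * Real.cos θ ^ (2 - p) := by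
      rw [hhcos θ hθ, Real.mul_rpow hc0.le hcosθ.le]
    have hck : (c / Real.cos θ) ^ k = c ^ (k:ℝ) * Real.cos θ ^ (-(k:ℝ)) := by
      rw [div_pow, Real.rpow_natCast, Real.rpow_neg hcosθ.le, Real.rpow_natCast]
      rw [div_eq_mul_inv]
    rw [hGdef, htan, hsum, hpow, hck]
    rw [hFdef]
    have e1 : c ^ (2 - p) * c ^ (k:ℝ) = c ^ (2 + (k:ℝ) - p) := by
      rw [← Real.rpow_add hc0]; ring_nf
    have e2 : Real.cos θ ^ (2 - p) * Real.cos θ ^ (-(k:ℝ)) = Real.cos θ ^ q := by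
      rw [← Real.rpow_add hcosθ, hqdef]; ring_nf
    calc φ θ * (c ^ (2 - p) * Real.cos θ ^ (2 - p)) *
          (a * 0 * (c / Real.cos θ) ^ (k-1) + b * (c ^ (k:ℝ) * Real.cos θ ^ (-(k:ℝ))))
        = b * (c ^ (2 - p) * c ^ (k:ℝ)) *
            (φ θ * (Real.cos θ ^ (2 - p) * Real.cos θ ^ (-(k:ℝ)))) := by ring
      _ = b * c ^ (2 + (k:ℝ) - p) * (φ θ * Real.cos θ ^ q) := by rw [e1, e2]
  have hGFev : G =ᶠ[nhds 0] F := Filter.eventuallyEq_of_mem hInhds hGF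
  -- Step D : derivatives of F
  set F1 : ℝ → ℝ := fun θ => deriv φ θ * Real.cos θ ^ q
      + φ θ * (-Real.sin θ * q * Real.cos θ ^ (q - 1)) with hF1def
  have hcospow : ∀ θ ∈ I, HasDerivAt (fun x => Real.cos x ^ q)
      (-Real.sin θ * q * Real.cos θ ^ (q - 1)) θ := fun θ hθ =>
    (Real.hasDerivAt_cos θ).rpow_const (Or.inl (hcos θ hθ).ne')
  have hF : ∀ θ ∈ I, HasDerivAt F (b * c ^ (2 + (k:ℝ) - p) * F1 θ) θ := by
    intro θ hθ
    have hφd := (hφ1 θ (hIU hθ)).hasDerivAt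
    exact ((hφd.mul (hcospow θ hθ)).const_mul _)
  have hderivF : ∀ θ ∈ I, deriv F θ = b * c ^ (2 + (k:ℝ) - p) * F1 θ :=
    fun θ hθ => (hF θ hθ).deriv
  -- F1 has a derivative at 0
  have hcos0 : Real.cos (0:ℝ) = 1 := Real.cos_zero
  have hA : HasDerivAt (fun θ => deriv φ θ * Real.cos θ ^ q) (deriv (deriv φ) 0) 0 := by
    have := (hφ2.hasDerivAt).mul (hcospow 0 hI0)
    exact this.congr_deriv (by simp [hφ'0])
  have hcospow' : HasDerivAt (fun x => Real.cos x ^ (q-1))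
      (-Real.sin 0 * (q-1) * Real.cos 0 ^ (q - 1 - 1)) 0 :=
    (Real.hasDerivAt_cos 0).rpow_const (Or.inl (by norm_num))
  have hg2 : HasDerivAt (fun θ => -Real.sin θ * q * Real.cos θ ^ (q - 1)) (-q) 0 := by
    have h1 : HasDerivAt (fun θ => -Real.sin θ * q) (-Real.cos 0 * q) 0 :=
      ((Real.hasDerivAt_sin 0).neg).mul_const q
    have := h1.mul hcospow'
    exact this.congr_deriv (by simp)
  have hB : HasDerivAt (fun θ => φ θ * (-Real.sin θ * q * Real.cos θ ^ (q - 1)))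
      (φ 0 * (-q)) 0 := by
    have := ((hφ1 0 hU0).hasDerivAt).mul hg2
    exact this.congr_deriv (by simp [hφ'0])
  have hF1 : HasDerivAt F1 (deriv (deriv φ) 0 + φ 0 * (-q)) 0 := hA.add hB
  have hF1c : HasDerivAt (fun θ => b * c ^ (2 + (k:ℝ) - p) * F1 θ)
      (b * c ^ (2 + (k:ℝ) - p) * (deriv (deriv φ) 0 + φ 0 * (-q))) 0 := hF1.const_mul _
  -- assemble
  have hdF : deriv F =ᶠ[nhds 0] (fun θ => b * c ^ (2 + (k:ℝ) - p) * F1 θ) :=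
    Filter.eventuallyEq_of_mem hInhds hderivF
  have hdG : deriv G =ᶠ[nhds 0] deriv F := hGFev.deriv
  have hdGF1 : deriv G =ᶠ[nhds 0] (fun θ => b * c ^ (2 + (k:ℝ) - p) * F1 θ) := hdG.trans hdF
  refine ⟨?_, ?_, ?_⟩
  · exact hGFev.differentiableAt_iff.2 (hF 0 hI0).differentiableAt
  · exact hdGF1.differentiableAt_iff.2 hF1c.differentiableAt
  · have h1 : deriv (deriv G) 0 = b * c ^ (2 + (k:ℝ) - p) * (deriv (deriv φ) 0 + φ 0 * (-q)) := by
      rw [hdGF1.deriv_eq]; exact hF1c.deriv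
    have h2 : G 0 = b * c ^ (2 + (k:ℝ) - p) * φ 0 := by
      rw [hGF 0 hI0, hFdef]
      simp [hcos0, Real.one_rpow]
    rw [h1, h2, hqdef]
    ring
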